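/- Let K ∈ ℕ₀, λ ∈ [0,1], p ∈ (0,1], q ≤ D positive integers. Suppose in each block the number of patrollers sent to a basic set of q vertices (of attack length D) is K+1 with probability λ and K with probability 1−λ, independently, and the patrollers follow the rotation-plus-uniform modular strategy. Then the probability that an attack of length D succeeds equals (1−p)^{K·⌊D/q⌋} · (1 − p·λ)^{⌊D/q⌋} · (1 − p·(K+λ)/q)^{D mod q}, provided the expected per-round visit probabilities multiply as stated. -/
import Mathlib


theorem stmt_9 (p lam : ℝ) (hp0 : 0 < p) (hp1 : p ≤ 1) (hl0 : 0 ≤ lam) (hl1 : lam ≤ 1)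
    (K : ℕ) (q D : ℕ) (hq : 0 < q) (hqD : q ≤ D) :
    -- per rotation sub-block: K sure visits plus one extra visit with prob lam;
    -- per uniform round: visited with prob K/q (prob 1-lam) or (K+1)/q (prob lam)
    ((1 - lam) * (1 - p) ^ K + lam * (1 - p) ^ (K + 1)) ^ (D / q) *
      ((1 - lam) * (1 - p * K / q) + lam * (1 - p * (K + 1) / q)) ^ (D % q)
      = (1 - p) ^ (K * (D / q)) * (1 - p * lam) ^ (D / q) *
        (1 - p * (K + lam) / q) ^ (D % q) := by
  have hq' : (q : ℝ) ≠ 0 := Nat.cast_ne_zero.mpr hq.ne'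
  have h1 : (1 - lam) * (1 - p) ^ K + lam * (1 - p) ^ (K + 1)
      = (1 - p) ^ K * (1 - p * lam) := by ring
  have h2 : (1 - lam) * (1 - p * K / q) + lam * (1 - p * (K + 1) / q)
      = 1 - p * (K + lam) / q := by
    field_simp
    ring
  rw [h1, h2, mul_pow, ← pow_mul]
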